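/- arXiv:2506.06075 — 2 statements merged into one kernel-verified Lean document; each statement's English description precedes it below -/
import Mathlib

section
/- Suppose Q₁₁, Q₂₂ > 0 and Q₁₂² < Q₁₁Q₂₂ with Q₁₂²/(Q₁₁Q₂₂) > 2√2 − 2. Then at γ = 1/√2, the average of the two stepwise bounds μ'(γ) = Q₂₂/(γΔ) + 1/((1−γ)Q₂₂) and μ''(γ) = Q₁₁/(γΔ) + 1/((1−γ)Q₁₁), where Δ = Q₁₁Q₂₂ − Q₁₂², satisfies (μ'(γ)+μ''(γ))/2 < (Q₁₁+Q₂₂)/Δ; hence min(μ'(γ), μ''(γ)) < Tr[Q⁻¹]. -/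
theorem stepwise_average_beats_joint_at_inv_sqrt_two
    (Q11 Q22 Q12 : ℝ) (h11 : 0 < Q11) (h22 : 0 < Q22)
    (hdet : Q12 ^ 2 < Q11 * Q22)
    (hcond : Q12 ^ 2 / (Q11 * Q22) > 2 * Real.sqrt 2 - 2) :
    let Δ := Q11 * Q22 - Q12 ^ 2
    let γ := 1 / Real.sqrt 2
    let μ' := Q22 / (γ * Δ) + 1 / ((1 - γ) * Q22)
    let μ'' := Q11 / (γ * Δ) + 1 / ((1 - γ) * Q11)
    (μ' + μ'') / 2 < (Q11 + Q22) / Δ ∧ min μ' μ'' < (Q11 + Q22) / Δ := by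
  intro Δ γ μ' μ''
  have hs2 : Real.sqrt 2 ^ 2 = 2 := Real.sq_sqrt (by norm_num)
  have hs0 : (0:ℝ) ≤ Real.sqrt 2 := Real.sqrt_nonneg 2
  have hs1 : 1 < Real.sqrt 2 := by nlinarith
  have hΔ : 0 < Δ := by simp only [Δ]; linarith
  have hQQ : 0 < Q11 * Q22 := mul_pos h11 h22
  have hkey : (2 * Real.sqrt 2 - 2) * (Q11 * Q22) < Q12 ^ 2 := by
    rw [gt_iff_lt, lt_div_iff₀ hQQ] at hcond
    exact hcond
  have hsne : Real.sqrt 2 ≠ 0 := by positivity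
  have hs1' : Real.sqrt 2 - 1 ≠ 0 := by linarith
  have hγΔ : γ * Δ = Δ / Real.sqrt 2 := by simp only [γ]; ring
  have h1γ : 1 - γ = (Real.sqrt 2 - 1) / Real.sqrt 2 := by
    simp only [γ]; field_simp
  have e : μ' + μ'' = (Real.sqrt 2 * (Q11 + Q22)) / Δ
      + (Real.sqrt 2 * (Q11 + Q22)) / ((Real.sqrt 2 - 1) * (Q11 * Q22)) := by
    simp only [μ', μ'', hγΔ, h1γ]
    field_simp
    ring
  have hstep : Real.sqrt 2 * Δ < (3 * Real.sqrt 2 - 4) * (Q11 * Q22) := by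
    have := mul_lt_mul_of_pos_left hkey (show (0:ℝ) < Real.sqrt 2 by linarith)
    simp only [Δ]
    nlinarith
  have hden : 0 < (Real.sqrt 2 - 1) * (Q11 * Q22) := by
    apply mul_pos (by linarith) hQQ
  have h2 : (Real.sqrt 2 * (Q11 + Q22)) / ((Real.sqrt 2 - 1) * (Q11 * Q22))
      < ((2 - Real.sqrt 2) * (Q11 + Q22)) / Δ := by
    rw [div_lt_div_iff₀ hden hΔ]
    have hprod := mul_lt_mul_of_pos_right hstep (add_pos h11 h22)
    have heq : (2 - Real.sqrt 2) * (Q11 + Q22) * ((Real.sqrt 2 - 1) * (Q11 * Q22))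
        = (3 * Real.sqrt 2 - 4) * (Q11 * Q22) * (Q11 + Q22) := by
      linear_combination (-(Q11 + Q22) * (Q11 * Q22)) * hs2
    calc Real.sqrt 2 * (Q11 + Q22) * Δ = Real.sqrt 2 * Δ * (Q11 + Q22) := by ring
      _ < (3 * Real.sqrt 2 - 4) * (Q11 * Q22) * (Q11 + Q22) := hprod
      _ = (2 - Real.sqrt 2) * (Q11 + Q22) * ((Real.sqrt 2 - 1) * (Q11 * Q22)) := heq.symm
  have e3 : (Real.sqrt 2 * (Q11 + Q22)) / Δ + ((2 - Real.sqrt 2) * (Q11 + Q22)) / Δ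
      = 2 * ((Q11 + Q22) / Δ) := by ring
  clear_value Δ γ μ' μ''
  have hmain : (μ' + μ'') / 2 < (Q11 + Q22) / Δ := by
    rw [e]
    linarith
  refine ⟨hmain, ?_⟩
  rcases le_total μ' μ'' with h | h
  · rw [min_eq_left h]; linarith
  · rw [min_eq_right h]; linarith
end

section
/- Let Q₁₁, Q₂₂ > 0, Δ = Q₁₁Q₂₂ − Q₁₂² > 0 and assume Q₁₂²/(Q₁₁Q₂₂) > 2√2 − 2. Then min over γ ∈ (0,1) of min(μ'(γ), μ''(γ)) < (Q₁₁+Q₂₂)/Δ, where μ'(γ) = Q₂₂/(γΔ) + 1/((1−γ)Q₂₂) and μ''(γ) = Q₁₁/(γΔ) + 1/((1−γ)Q₁₁). -/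
-- auxiliary: optimal split of budget for a/γ + b/(1-γ)
lemma aux_split (a b c : ℝ) (ha : 0 < a) (hb : 0 < b)
    (h : (Real.sqrt a + Real.sqrt b) ^ 2 < c) :
    ∃ γ : ℝ, 0 < γ ∧ γ < 1 ∧ a / γ + b / (1 - γ) < c := by
  set sa := Real.sqrt a with hsa
  set sb := Real.sqrt b with hsb
  have hsa0 : 0 < sa := Real.sqrt_pos.mpr ha
  have hsb0 : 0 < sb := Real.sqrt_pos.mpr hb
  have hab : 0 < sa + sb := by linarith
  refine ⟨sa / (sa + sb), div_pos hsa0 hab, ?_, ?_⟩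
  · rw [div_lt_one hab]; linarith
  · have h1 : 1 - sa / (sa + sb) = sb / (sa + sb) := by field_simp; ring
    have ha2 : sa ^ 2 = a := Real.sq_sqrt ha.le
    have hb2 : sb ^ 2 = b := Real.sq_sqrt hb.le
    have key : a / (sa / (sa + sb)) + b / (1 - sa / (sa + sb)) = (sa + sb) ^ 2 := by
      rw [h1, ← ha2, ← hb2]
      field_simp
    rw [key]; exact h

-- auxiliary: one-sided version
lemma aux_one (A B Q12 : ℝ) (hA : 0 < A) (hB : 0 < B)
    (hΔ : 0 < A * B - Q12 ^ 2)
    (hcond : Q12 ^ 2 / (A * B) > 2 * Real.sqrt 2 - 2)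
    (hBA : B ≤ A) :
    ∃ γ : ℝ, 0 < γ ∧ γ < 1 ∧
      B / (γ * (A * B - Q12 ^ 2)) + 1 / ((1 - γ) * B) < (A + B) / (A * B - Q12 ^ 2) := by
  set Δ := A * B - Q12 ^ 2 with hΔdef
  set s := A * B with hs
  have hs0 : 0 < s := mul_pos hA hB
  have hq : (2 * Real.sqrt 2 - 2) * s < Q12 ^ 2 := (lt_div_iff₀ hs0).mp hcond
  have h2 : Real.sqrt 2 ^ 2 = 2 := Real.sq_sqrt (by norm_num)
  have hsqrt2 : 0 < Real.sqrt 2 := Real.sqrt_pos.mpr (by norm_num)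
  -- Q12^4 > 4 s Δ
  have hprod : (Q12 ^ 2 + 2 * s - 2 * Real.sqrt 2 * s) * (Q12 ^ 2 + 2 * s + 2 * Real.sqrt 2 * s)
      = Q12 ^ 4 + 4 * s * Q12 ^ 2 - 4 * s ^ 2 := by
    linear_combination (-4 * s ^ 2) * h2
  have hmain : Q12 ^ 4 > 4 * s * Δ := by
    have f1 : Q12 ^ 2 + 2 * s - 2 * Real.sqrt 2 * s > 0 := by linarith
    have f2 : Q12 ^ 2 + 2 * s + 2 * Real.sqrt 2 * s > 0 := by positivity
    have hp : 0 < Q12 ^ 4 + 4 * s * Q12 ^ 2 - 4 * s ^ 2 := by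
      rw [← hprod]; exact mul_pos f1 f2
    have hΔe : 4 * s * Δ = 4 * s ^ 2 - 4 * s * Q12 ^ 2 := by rw [hΔdef]; ring
    linarith
  set t := Real.sqrt Δ with ht
  have ht0 : 0 < t := Real.sqrt_pos.mpr hΔ
  have ht2 : t ^ 2 = Δ := Real.sq_sqrt hΔ.le
  have hQ : Q12 ^ 2 = A * B - t ^ 2 := by rw [ht2, hΔdef]; ring
  -- key : 2 B t < Q12^2
  have hkey : 2 * B * t < Q12 ^ 2 := by
    have hsq : (2 * B * t) ^ 2 < (Q12 ^ 2) ^ 2 := by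
      have h1 : B ^ 2 ≤ s := by nlinarith
      nlinarith
    exact lt_of_pow_lt_pow_left₀ 2 (sq_nonneg Q12) hsq
  -- the square bound
  have hbound : (Real.sqrt (B / Δ) + Real.sqrt (1 / B)) ^ 2 < (A + B) / Δ := by
    have e1 : Real.sqrt (B / Δ) ^ 2 = B / Δ := Real.sq_sqrt (by positivity)
    have e2 : Real.sqrt (1 / B) ^ 2 = 1 / B := Real.sq_sqrt (by positivity)
    have e3 : Real.sqrt (B / Δ) * Real.sqrt (1 / B) = 1 / t := by
      rw [← Real.sqrt_mul (by positivity)]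
      have hm : B / Δ * (1 / B) = Δ⁻¹ := by field_simp
      rw [hm, Real.sqrt_inv, ← ht, one_div]
    have expand : (Real.sqrt (B / Δ) + Real.sqrt (1 / B)) ^ 2
        = B / Δ + 2 * (1 / t) + 1 / B := by
      rw [add_sq, e1, e2, mul_assoc, e3]
    rw [expand]
    have hne : (A + B) / Δ - (B / Δ + 2 * (1 / t) + 1 / B)
        = (Q12 ^ 2 - 2 * B * t) / (t ^ 2 * B) := by
      rw [hQ, ← ht2]
      field_simp
      ring
    have hpos : 0 < (A + B) / Δ - (B / Δ + 2 * (1 / t) + 1 / B) := by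
      rw [hne]
      apply div_pos (by linarith) (by positivity)
    linarith
  obtain ⟨γ, hγ0, hγ1, hlt⟩ := aux_split (B / Δ) (1 / B) ((A + B) / Δ)
    (by positivity) (by positivity) hbound
  refine ⟨γ, hγ0, hγ1, ?_⟩
  have e1 : B / (γ * Δ) = B / Δ / γ := by rw [div_div, mul_comm]
  have e2 : 1 / ((1 - γ) * B) = 1 / B / (1 - γ) := by
    rw [one_div, one_div, mul_inv, div_eq_mul_inv, mul_comm]
  rw [e1, e2]; exact hlt

theorem stepwise_beats_joint_main
    (Q11 Q22 Q12 : ℝ) (h11 : 0 < Q11) (h22 : 0 < Q22)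
    (hΔ : 0 < Q11 * Q22 - Q12 ^ 2)
    (hcond : Q12 ^ 2 / (Q11 * Q22) > 2 * Real.sqrt 2 - 2) :
    let Δ := Q11 * Q22 - Q12 ^ 2
    let μ' : ℝ → ℝ := fun γ => Q22 / (γ * Δ) + 1 / ((1 - γ) * Q22)
    let μ'' : ℝ → ℝ := fun γ => Q11 / (γ * Δ) + 1 / ((1 - γ) * Q11)
    ∃ γ : ℝ, 0 < γ ∧ γ < 1 ∧ min (μ' γ) (μ'' γ) < (Q11 + Q22) / Δ := by
  intro Δ μ' μ''
  by_cases h : Q22 ≤ Q11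
  · obtain ⟨γ, hγ0, hγ1, hlt⟩ := aux_one Q11 Q22 Q12 h11 h22 hΔ hcond h
    exact ⟨γ, hγ0, hγ1, (min_le_left _ _).trans_lt hlt⟩
  · push_neg at h
    have hΔ' : 0 < Q22 * Q11 - Q12 ^ 2 := by rw [mul_comm]; exact hΔ
    have hcond' : Q12 ^ 2 / (Q22 * Q11) > 2 * Real.sqrt 2 - 2 := by
      rw [mul_comm]; exact hcond
    obtain ⟨γ, hγ0, hγ1, hlt⟩ := aux_one Q22 Q11 Q12 h22 h11 hΔ' hcond' h.le
    refine ⟨γ, hγ0, hγ1, (min_le_right _ _).trans_lt ?_⟩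
    have e : Q22 * Q11 - Q12 ^ 2 = Δ := by rw [mul_comm]
    rw [e] at hlt
    show Q11 / (γ * Δ) + 1 / ((1 - γ) * Q11) < (Q11 + Q22) / Δ
    rw [add_comm Q22 Q11] at hlt
    exact hlt
end
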